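/- Let G be a finite group and H a subgroup. If H is nilpotent and subnormal in G, then the normal closure of H in G is nilpotent. -/

import Mathlib

open Subgroup

section PCore

variable (p : ℕ) (G : Type*) [Group G]

/-- The `p`-core: join of all normal `p`-subgroups. -/
def pCore : Subgroup G :=
  ⨆ Q : {Q : Subgroup G // Q.Normal ∧ IsPGroup p Q}, (Q : Subgroup G)

variable {p} {G}

lemma le_pCore {Q : Subgroup G} (h1 : Q.Normal) (h2 : IsPGroup p Q) : Q ≤ pCore p G :=
  le_iSup (fun Q : {Q : Subgroup G // Q.Normal ∧ IsPGroup p Q} => (Q : Subgroup G)) ⟨Q, h1, h2⟩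

instance : Nonempty {Q : Subgroup G // Q.Normal ∧ IsPGroup p Q} :=
  ⟨⟨⊥, inferInstance, IsPGroup.of_bot⟩⟩

lemma pCore_directed :
    Directed (· ≤ ·) (fun Q : {Q : Subgroup G // Q.Normal ∧ IsPGroup p Q} => (Q : Subgroup G)) := by
  rintro ⟨A, hAn, hAp⟩ ⟨B, hBn, hBp⟩
  haveI := hAn; haveI := hBn
  exact ⟨⟨A ⊔ B, inferInstance, hAp.to_sup_of_normal_right hBp⟩, le_sup_left, le_sup_right⟩

lemma mem_pCore_iff {x : G} : x ∈ pCore p G ↔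
    ∃ Q : Subgroup G, Q.Normal ∧ IsPGroup p Q ∧ x ∈ Q := by
  rw [pCore, mem_iSup_of_directed pCore_directed]
  constructor
  · rintro ⟨⟨Q, h1, h2⟩, h⟩; exact ⟨Q, h1, h2, h⟩
  · rintro ⟨Q, h1, h2, h⟩; exact ⟨⟨Q, h1, h2⟩, h⟩

lemma pCore_isPGroup : IsPGroup p (pCore p G) := by
  intro g
  obtain ⟨Q, h1, h2, hg⟩ := mem_pCore_iff.mp g.2
  obtain ⟨k, hk⟩ := h2 ⟨(g : G), hg⟩
  refine ⟨k, ?_⟩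
  ext
  have := congrArg (fun x : Q => (x : G)) hk
  push_cast at this ⊢
  simpa using this

instance pCore_normal : (pCore p G).Normal := by
  constructor
  intro n hn g
  obtain ⟨Q, h1, h2, hg⟩ := mem_pCore_iff.mp hn
  exact le_pCore h1 h2 (h1.conj_mem n hg g)

lemma pCore_map_equiv_le {G' : Type*} [Group G'] (e : G ≃* G') :
    (pCore p G).map e.toMonoidHom ≤ pCore p G' := by
  rw [pCore, Subgroup.map_iSup]
  refine iSup_le ?_
  rintro ⟨Q, h1, h2⟩
  exact le_pCore (h1.map _ e.surjective) (h2.map _)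

lemma pCore_map_equiv {G' : Type*} [Group G'] (e : G ≃* G') :
    (pCore p G).map e.toMonoidHom = pCore p G' := by
  refine le_antisymm (pCore_map_equiv_le e) ?_
  have h2 := pCore_map_equiv_le (p := p) e.symm
  have : ((pCore p G').map e.symm.toMonoidHom).map e.toMonoidHom ≤
      (pCore p G).map e.toMonoidHom := Subgroup.map_mono h2
  rwa [Subgroup.map_map, show e.toMonoidHom.comp e.symm.toMonoidHom = MonoidHom.id G' by
    ext x; exact e.apply_symm_apply x, Subgroup.map_id] at this

lemma pCore_map_subtype_normal {K : Subgroup G} (hK : K.Normal) :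
    ((pCore p K).map K.subtype).Normal := by
  haveI := hK
  constructor
  rintro n hn g
  obtain ⟨x, hx, rfl⟩ := hn
  refine ⟨MulAut.conjNormal g x, ?_, by simp⟩
  have := pCore_map_equiv (p := p) (MulAut.conjNormal g : K ≃* K)
  rw [← this]
  exact ⟨x, hx, rfl⟩

end PCore
universe u

/-- `A` is a normal subgroup of `B` (for subgroups of an ambient group `G`). -/
def NormalIn {G : Type*} [Group G] (A B : Subgroup G) : Prop :=
  A ≤ B ∧ ∀ b ∈ B, ∀ a ∈ A, b * a * b⁻¹ ∈ A

/-- `H` is subnormal in `G`: there is a chain `H = H₀ ⊴ H₁ ⊴ ⋯ ⊴ Hₙ = G`. -/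
def Subnormal {G : Type*} [Group G] (H : Subgroup G) : Prop :=
  ∃ (n : ℕ) (c : ℕ → Subgroup G), c 0 = H ∧ c n = ⊤ ∧
    ∀ i < n, NormalIn (c i) (c (i + 1))

lemma chain_le {G : Type*} [Group G] {c : ℕ → Subgroup G} {n : ℕ}
    (hc : ∀ i < n, NormalIn (c i) (c (i + 1))) : ∀ i ≤ n, c 0 ≤ c i := by
  intro i
  induction i with
  | zero => intro _; exact le_rfl
  | succ i ih => intro h; exact (ih (Nat.le_of_succ_le h)).trans (hc i (Nat.lt_of_succ_le h)).1

lemma pgroup_subnormal_le_pCore (p : ℕ) (n : ℕ) :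
    ∀ {G : Type u} [Group G] [Finite G] (P : Subgroup G) (c : ℕ → Subgroup G),
    c 0 = P → c n = ⊤ → (∀ i < n, NormalIn (c i) (c (i + 1))) → IsPGroup p P →
    P ≤ pCore p G := by
  induction n with
  | zero =>
    intro G _ _ P c h0 hn hc hP
    obtain rfl : P = ⊤ := h0.symm.trans hn
    exact le_pCore inferInstance hP
  | succ n ih =>
    intro G _ _ P c h0 hn hc hP
    set K := c n with hK
    haveI hKnorm : K.Normal := by
      constructor
      intro a ha g
      exact (hc n (Nat.lt_succ_self n)).2 g (by rw [hn]; trivial) a ha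
    have hPK : P ≤ K := h0 ▸ chain_le (fun i hi => hc i (hi.trans (Nat.lt_succ_self n))) n le_rfl
    -- chain inside K
    have key : P.subgroupOf K ≤ pCore p K := by
      refine ih (P.subgroupOf K) (fun i => (c (min i n)).subgroupOf K) ?_ ?_ ?_ ?_
      · rw [Nat.min_eq_left (Nat.zero_le n), h0]
      · rw [Nat.min_self, ← hK, subgroupOf_self]
      · intro i hi
        rw [Nat.min_eq_left hi.le, Nat.min_eq_left hi]
        constructor
        · intro x hx
          exact mem_subgroupOf.2 ((hc i (hi.trans (Nat.lt_succ_self n))).1 (mem_subgroupOf.1 hx))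
        · intro b hb a ha
          refine mem_subgroupOf.2 ?_
          have := (hc i (hi.trans (Nat.lt_succ_self n))).2 b (mem_subgroupOf.1 hb) a
            (mem_subgroupOf.1 ha)
          simpa using this
      · exact hP.comap_subtype
    have hM : ((pCore p K).map K.subtype).Normal := pCore_map_subtype_normal hKnorm
    have hMp : IsPGroup p ((pCore p K).map K.subtype) := pCore_isPGroup.map K.subtype
    refine le_trans ?_ (le_pCore hM hMp)
    intro x hx
    exact ⟨⟨x, hPK hx⟩, key (mem_subgroupOf.2 hx), rfl⟩

lemma iSup_normal {G : Type*} [Group G] {ι : Sort*} (S : ι → Subgroup G)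
    (h : ∀ i, (S i).Normal) : (⨆ i, S i).Normal := by
  constructor
  intro x hx g
  refine Subgroup.iSup_induction (C := fun x => g * x * g⁻¹ ∈ ⨆ i, S i) S hx
    (fun i x hxi => ?_) (by simpa using one_mem _) (fun x y hx hy => ?_)
  · exact le_iSup S i ((h i).conj_mem x hxi g)
  · show g * (x * y) * g⁻¹ ∈ ⨆ i, S i
    have : g * (x * y) * g⁻¹ = (g * x * g⁻¹) * (g * y * g⁻¹) := by group
    rw [this]; exact mul_mem hx hy

lemma F_nilpotent {G : Type*} [Group G] [Finite G] :
    Group.IsNilpotent ↥(⨆ p : (Nat.card G).primeFactors, pCore (p : ℕ) G) := by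
  classical
  have hcomm : Pairwise fun p₁ p₂ : (Nat.card G).primeFactors =>
      ∀ x y : G, x ∈ pCore (p₁ : ℕ) G → y ∈ pCore (p₂ : ℕ) G → Commute x y := by
    rintro ⟨p₁, h₁⟩ ⟨p₂, h₂⟩ hne
    haveI := Fact.mk (Nat.prime_of_mem_primeFactors h₁)
    haveI := Fact.mk (Nat.prime_of_mem_primeFactors h₂)
    have hne' : p₁ ≠ p₂ := by simpa using hne
    exact Subgroup.commute_of_normal_of_disjoint _ _ pCore_normal pCore_normal
      (IsPGroup.disjoint_of_ne p₁ p₂ hne' _ _ pCore_isPGroup pCore_isPGroup)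
  haveI : ∀ p : (Nat.card G).primeFactors, Group.IsNilpotent (pCore (p : ℕ) G) := by
    rintro ⟨q, hq⟩
    haveI := Fact.mk (Nat.prime_of_mem_primeFactors hq)
    exact IsPGroup.isNilpotent pCore_isPGroup
  rw [← Subgroup.noncommPiCoprod_range (hcomm := hcomm)]
  exact nilpotent_of_surjective _
    (MonoidHom.rangeRestrict_surjective (Subgroup.noncommPiCoprod hcomm))

lemma sylow_iSup_eq_top {H : Type*} [Group H] [Finite H]
    (hn : ∀ (p : ℕ) [Fact p.Prime] (P : Sylow p H), (P : Subgroup H).Normal) :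
    (⨆ p : (Nat.card H).primeFactors, ((default : Sylow (p : ℕ) H) : Subgroup H)) = ⊤ := by
  classical
  have := Fintype.ofFinite H
  set ps := (Nat.card H).primeFactors with hps
  let P : ∀ p, Sylow p H := default
  have hPfin : ∀ p, Fintype (P p) := fun p => Fintype.ofFinite (P p)
  have hcomm : Pairwise fun p₁ p₂ : ps => ∀ x y : H, x ∈ P p₁ → y ∈ P p₂ → Commute x y := by
    rintro ⟨p₁, hp₁⟩ ⟨p₂, hp₂⟩ hne
    haveI hp₁' := Fact.mk (Nat.prime_of_mem_primeFactors hp₁)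
    haveI hp₂' := Fact.mk (Nat.prime_of_mem_primeFactors hp₂)
    have hne' : p₁ ≠ p₂ := by simpa using hne
    apply Subgroup.commute_of_normal_of_disjoint _ _ (hn p₁ (P p₁)) (hn p₂ (P p₂))
    exact IsPGroup.disjoint_of_ne p₁ p₂ hne' _ _ (P p₁).isPGroup' (P p₂).isPGroup'
  show (⨆ p : ps, ((P (p : ℕ) : Subgroup H))) = ⊤
  rw [← Subgroup.noncommPiCoprod_range (hcomm := hcomm)]
  rw [MonoidHom.range_eq_top]
  apply Function.Bijective.surjective
  apply (Fintype.bijective_iff_injective_and_card _).mpr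
  constructor
  · apply Subgroup.injective_noncommPiCoprod_of_iSupIndep
    apply Subgroup.independent_of_coprime_order hcomm
    rintro ⟨p₁, hp₁⟩ ⟨p₂, hp₂⟩ hne
    haveI hp₁' := Fact.mk (Nat.prime_of_mem_primeFactors hp₁)
    haveI hp₂' := Fact.mk (Nat.prime_of_mem_primeFactors hp₂)
    have hne' : p₁ ≠ p₂ := by simpa using hne
    simp only [← Nat.card_eq_fintype_card]
    exact IsPGroup.coprime_card_of_ne p₁ p₂ hne' _ _ (P p₁).isPGroup' (P p₂).isPGroup'
  · simp only [← Nat.card_eq_fintype_card]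
    calc
      Nat.card (∀ p : ps, P p) = ∏ p : ps, Nat.card (P p) := Nat.card_pi
      _ = ∏ p : ps, (p : ℕ) ^ (Nat.card H).factorization p := by
        congr 1 with ⟨p, hp⟩
        exact @Sylow.card_eq_multiplicity _ _ _ p ⟨Nat.prime_of_mem_primeFactors hp⟩ (P p)
      _ = ∏ p ∈ ps, p ^ (Nat.card H).factorization p :=
        (Finset.prod_finset_coe (fun p => p ^ (Nat.card H).factorization p) _)
      _ = (Nat.card H).factorization.prod (· ^ ·) := rfl
      _ = Nat.card H := Nat.factorization_prod_pow_eq_self Nat.card_pos.ne'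


/-- If `H` is nilpotent and subnormal in the finite group `G`, then the normal
closure of `H` in `G` is nilpotent. -/
theorem stmt7 {G : Type*} [Group G] [Finite G] (H : Subgroup G)
    (hHnilp : Group.IsNilpotent H) (hHsub : Subnormal H) :
    Group.IsNilpotent (Subgroup.normalClosure (H : Set G)) := by
  classical
  haveI hFnorm : (⨆ p : (Nat.card G).primeFactors, pCore (p : ℕ) G).Normal :=
    iSup_normal _ (fun _ => pCore_normal)
  have hHF : H ≤ ⨆ p : (Nat.card G).primeFactors, pCore (p : ℕ) G := by
    have hn : ∀ (p : ℕ) [Fact p.Prime] (P : Sylow p ↥H), (P : Subgroup ↥H).Normal := by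
      intro p hp P
      have h03 := (isNilpotent_of_finite_tfae (G := ↥H)).out 0 3
      exact h03.mp hHnilp p hp P
    have htop := sylow_iSup_eq_top hn
    have hmap : Subgroup.map H.subtype ⊤ = H :=
      (MonoidHom.range_eq_map H.subtype).symm.trans (Subgroup.range_subtype H)
    refine le_trans (le_of_eq hmap.symm) ?_
    rw [← htop, Subgroup.map_iSup]
    refine iSup_le ?_
    rintro ⟨p, hp⟩
    haveI := Fact.mk (Nat.prime_of_mem_primeFactors hp)
    set Q : Subgroup G := ((default : Sylow p ↥H) : Subgroup ↥H).map H.subtype with hQdef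
    have hQp : IsPGroup p Q := ((default : Sylow p ↥H).isPGroup').map H.subtype
    obtain ⟨n, c, hc0, hcn, hcc⟩ := hHsub
    have hQcore : Q ≤ pCore p G := by
      refine pgroup_subnormal_le_pCore p (n + 1) Q
        (fun i => match i with | 0 => Q | (j + 1) => c j) rfl hcn ?_ hQp
      intro i hi
      match i with
      | 0 =>
        constructor
        · show Q ≤ c 0
          rw [hc0]; exact Subgroup.map_subtype_le _
        · intro b hb a ha
          show b * a * b⁻¹ ∈ Q
          have hb2 : b ∈ c 0 := hb
          rw [hc0] at hb2
          have ha2 : a ∈ Q := ha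
          obtain ⟨a', ha', rfl⟩ := ha2
          have hconj := (hn p (default : Sylow p ↥H)).conj_mem a' ha' ⟨b, hb2⟩
          exact ⟨_, hconj, by simp⟩
      | (j + 1) => exact hcc j (by omega)
    refine hQcore.trans ?_
    have hpG : p ∈ (Nat.card G).primeFactors := by
      rw [Nat.mem_primeFactors] at hp ⊢
      exact ⟨hp.1, hp.2.1.trans (Subgroup.card_subgroup_dvd_card H), Nat.card_pos.ne'⟩
    exact le_iSup (fun q : (Nat.card G).primeFactors => pCore (q : ℕ) G) ⟨p, hpG⟩
  have hle : Subgroup.normalClosure (H : Set G) ≤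
      ⨆ p : (Nat.card G).primeFactors, pCore (p : ℕ) G :=
    Subgroup.normalClosure_le_normal hHF
  haveI := F_nilpotent (G := G)
  haveI : Group.IsNilpotent
      ((Subgroup.normalClosure (H : Set G)).subgroupOf
        (⨆ p : (Nat.card G).primeFactors, pCore (p : ℕ) G)) :=
    Subgroup.isNilpotent _
  exact nilpotent_of_mulEquiv (Subgroup.subgroupOfEquivOfLe hle)
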